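/- arXiv:2307.00261 — 3 statements merged into one kernel-verified Lean document; each statement's English description precedes it below -/
import Mathlib

section
/- Let K be a field extension of k such that the number of k-algebra homomorphisms from F to K equals dim_k F. Then for every t ∈ F³ and all φ, ψ ∈ (F →ₐ[k] K), one has Π(φ,ψ)(Tr(t)) = Σ_{χ ∈ (F →ₐ[k] K)} Π(φ,χ,ψ)(t). -/
open TensorProduct

universe u

variable (k F : Type u) [Field k] [CommRing F] [Algebra k F]

/-- `ε₀ : F ⊗ F → F ⊗ F ⊗ F`, `x ⊗ y ↦ 1 ⊗ x ⊗ y`. -/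
noncomputable def eps0 : F ⊗[k] F →ₐ[k] F ⊗[k] (F ⊗[k] F) :=
  Algebra.TensorProduct.includeRight

/-- `ε₁ : F ⊗ F → F ⊗ F ⊗ F`, `x ⊗ y ↦ x ⊗ 1 ⊗ y`. -/
noncomputable def eps1 : F ⊗[k] F →ₐ[k] F ⊗[k] (F ⊗[k] F) :=
  Algebra.TensorProduct.map (AlgHom.id k F) Algebra.TensorProduct.includeRight

/-- `ε₂ : F ⊗ F → F ⊗ F ⊗ F`, `x ⊗ y ↦ x ⊗ y ⊗ 1`. -/
noncomputable def eps2 : F ⊗[k] F →ₐ[k] F ⊗[k] (F ⊗[k] F) :=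
  Algebra.TensorProduct.map (AlgHom.id k F) Algebra.TensorProduct.includeLeft

/-- `F³` regarded as an `F²`-algebra via `ε₁`. -/
noncomputable instance : Algebra (F ⊗[k] F) (F ⊗[k] (F ⊗[k] F)) :=
  (eps1 k F).toRingHom.toAlgebra

/-- The trace of `F³` as an `F²`-algebra (via `ε₁`). -/
noncomputable def trF3 : F ⊗[k] (F ⊗[k] F) →ₗ[F ⊗[k] F] F ⊗[k] F :=
  Algebra.trace (F ⊗[k] F) (F ⊗[k] (F ⊗[k] F))

/-- The Brauer-factor-set multiplication `⋆_c` on `F²` attached to `c ∈ F³`,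
`x ⋆_c y = Tr(ε₂(x)·c·ε₀(y))`. The `k`-vector space `F²` with this multiplication
is the algebra `A(F,c)`. -/
noncomputable def starMul (c : F ⊗[k] (F ⊗[k] F)) (x y : F ⊗[k] F) : F ⊗[k] F :=
  trF3 k F (eps2 k F x * c * eps0 k F y)

/-! ### Auxiliary material -/

/-- The `k`-algebra equivalence `F ⊗ (F ⊗ F) ≃ (F ⊗ F) ⊗ F`, `x ⊗ y ⊗ z ↦ (x ⊗ z) ⊗ y`. -/
noncomputable def eaAux : F ⊗[k] (F ⊗[k] F) ≃ₐ[k] (F ⊗[k] F) ⊗[k] F :=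
  (Algebra.TensorProduct.congr AlgEquiv.refl (Algebra.TensorProduct.comm k F F)).trans
    (Algebra.TensorProduct.assoc k k k F F F).symm

@[simp] theorem eaAux_tmul (x y z : F) :
    eaAux k F (x ⊗ₜ[k] (y ⊗ₜ[k] z)) = (x ⊗ₜ[k] z) ⊗ₜ[k] y := by
  simp [eaAux]

theorem eaAux_eps1 (a : F ⊗[k] F) : eaAux k F (eps1 k F a) = a ⊗ₜ[k] (1 : F) := by
  induction a using TensorProduct.induction_on with
  | zero => simp
  | tmul x y => simp [eps1]
  | add a b ha hb => simp [map_add, ha, hb, TensorProduct.add_tmul]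

/-- `eaAux` as an `F²`-linear equivalence, where `F³` is an `F²`-module via `ε₁` and
`F² ⊗ F` via the left factor. -/
theorem smul_eq_mul_tmul_one (a : F ⊗[k] F) (u : (F ⊗[k] F) ⊗[k] F) :
    a • u = (a ⊗ₜ[k] (1 : F)) * u := by
  induction u using TensorProduct.induction_on with
  | zero => simp
  | tmul p q =>
    rw [TensorProduct.smul_tmul', Algebra.TensorProduct.tmul_mul_tmul, one_mul, smul_eq_mul]
  | add u v hu hv => rw [smul_add, mul_add, hu, hv]

/-- `eaAux` as an `F²`-linear equivalence. -/
noncomputable def eLin : F ⊗[k] (F ⊗[k] F) ≃ₗ[F ⊗[k] F] (F ⊗[k] F) ⊗[k] F where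
  toFun := eaAux k F
  map_add' := map_add _
  map_smul' a t := by
    simp only [RingHom.id_apply]
    show eaAux k F (a • t) = a • eaAux k F t
    rw [Algebra.smul_def, map_mul, smul_eq_mul_tmul_one]
    congr 1
    show eaAux k F (eps1 k F a) = _
    rw [eaAux_eps1]
  invFun := (eaAux k F).symm
  left_inv := (eaAux k F).left_inv
  right_inv := (eaAux k F).right_inv

@[simp] theorem eLin_apply (t : F ⊗[k] (F ⊗[k] F)) : eLin k F t = eaAux k F t := rfl
@[simp] theorem eLin_symm_apply (t : (F ⊗[k] F) ⊗[k] F) :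
    (eLin k F).symm t = (eaAux k F).symm t := rfl

theorem trF3_one_tmul_one [FiniteDimensional k F] (y : F) :
    trF3 k F ((1 : F) ⊗ₜ[k] (y ⊗ₜ[k] (1 : F))) =
      algebraMap k (F ⊗[k] F) (Algebra.trace k F y) := by
  have hcomp : (eLin k F).toLinearMap ∘ₗ
        Algebra.lmul (F ⊗[k] F) (F ⊗[k] (F ⊗[k] F)) ((1 : F) ⊗ₜ[k] (y ⊗ₜ[k] (1 : F))) =
      ((Algebra.lmul k F y).baseChange (F ⊗[k] F)) ∘ₗ (eLin k F).toLinearMap := by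
    apply LinearMap.ext
    intro t
    induction t using TensorProduct.induction_on with
    | zero => simp
    | tmul x s =>
      induction s using TensorProduct.induction_on with
      | zero => simp [TensorProduct.tmul_zero]
      | tmul y' z =>
        simp [Algebra.TensorProduct.tmul_mul_tmul]
      | add a b ha hb =>
        simp only [LinearMap.comp_apply] at ha hb ⊢
        simp only [TensorProduct.tmul_add, map_add, mul_add, ha, hb]
    | add a b ha hb =>
      simp only [LinearMap.comp_apply] at ha hb ⊢
      simp only [map_add, mul_add, ha, hb]
  have hconj : (eLin k F).conj
        (Algebra.lmul (F ⊗[k] F) (F ⊗[k] (F ⊗[k] F)) ((1 : F) ⊗ₜ[k] (y ⊗ₜ[k] (1 : F)))) =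
      (Algebra.lmul k F y).baseChange (F ⊗[k] F) := by
    refine LinearMap.ext fun v => ?_
    have := LinearMap.congr_fun hcomp ((eLin k F).symm v)
    simpa [LinearEquiv.conj_apply] using this
  rw [trF3, Algebra.trace_apply, ← LinearMap.trace_conj' _ (eLin k F), hconj,
    LinearMap.trace_baseChange, ← Algebra.trace_apply]

theorem trF3_tmul [FiniteDimensional k F] (x y z : F) :
    trF3 k F (x ⊗ₜ[k] (y ⊗ₜ[k] z)) = Algebra.trace k F y • (x ⊗ₜ[k] z) := by
  have h1 : x ⊗ₜ[k] (y ⊗ₜ[k] z) =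
      (x ⊗ₜ[k] z) • ((1 : F) ⊗ₜ[k] (y ⊗ₜ[k] (1 : F))) := by
    rw [Algebra.smul_def]
    show _ = eps1 k F (x ⊗ₜ[k] z) * _
    simp [eps1, Algebra.TensorProduct.tmul_mul_tmul]
  rw [h1, map_smul, trF3_one_tmul_one, smul_eq_mul, Algebra.smul_def, mul_comm]

theorem algebraMap_trace_eq_sum_algHom [FiniteDimensional k F] (K : Type u) [Field K]
    [Algebra k K] [Fintype (F →ₐ[k] K)]
    (hcard : Fintype.card (F →ₐ[k] K) = Module.finrank k F) (y : F) :
    algebraMap k K (Algebra.trace k F y) = ∑ χ : F →ₐ[k] K, χ y := by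
  classical
  let Φ : K ⊗[k] F →ₐ[K] ((F →ₐ[k] K) → K) :=
    Algebra.TensorProduct.lift (Algebra.ofId K _) (Pi.algHom k (fun _ : F →ₐ[k] K => K) (fun χ : F →ₐ[k] K => χ))
      fun _ _ => Commute.all _ _
  have hΦ : ∀ (c : K) (f : F), Φ (c ⊗ₜ[k] f) = fun χ : F →ₐ[k] K => c * χ f := by
    intro c f
    ext χ
    simp [Φ, Algebra.TensorProduct.lift_tmul, Algebra.ofId_apply, Pi.algHom]
  -- surjectivity
  have hsurj : Function.Surjective Φ.toLinearMap := by
    rw [← LinearMap.range_eq_top]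
    by_contra h
    obtain ⟨g, hg0, hg⟩ := Submodule.exists_dual_map_eq_bot_of_lt_top
      (lt_top_iff_ne_top.mpr h) inferInstance
    have hann : ∀ v ∈ LinearMap.range Φ.toLinearMap, g v = 0 := by
      intro v hv
      have : g v ∈ Submodule.map g (LinearMap.range Φ.toLinearMap) :=
        Submodule.mem_map_of_mem hv
      rw [hg] at this
      exact (Submodule.mem_bot K).mp this
    have hgsum : ∀ v : (F →ₐ[k] K) → K, g v = ∑ χ : F →ₐ[k] K, v χ * g (Pi.single χ 1) := by
      intro v
      conv_lhs => rw [← Finset.univ_sum_single v]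
      rw [map_sum]
      refine Finset.sum_congr rfl fun χ _ => ?_
      have h1 : (Pi.single χ (v χ) : (F →ₐ[k] K) → K) = v χ • (Pi.single χ (1 : K) : (F →ₐ[k] K) → K) := by
        funext j
        by_cases hj : j = χ <;> simp [Pi.single_apply, hj]
      rw [h1, map_smul, smul_eq_mul]
    have hc : ∀ χ : F →ₐ[k] K, g (Pi.single χ 1) = 0 := by
      have li := linearIndependent_algHom_toLinearMap k F K
      rw [Fintype.linearIndependent_iff] at li
      refine li (fun χ => g (Pi.single χ 1)) ?_
      ext f
      have h0 : g (Φ ((1 : K) ⊗ₜ[k] f)) = 0 := by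
        refine hann _ (LinearMap.mem_range.mpr ⟨(1 : K) ⊗ₜ[k] f, rfl⟩)
      rw [hΦ, hgsum] at h0
      simpa [mul_comm] using h0
    refine hg0 (LinearMap.ext fun v => ?_)
    rw [hgsum]
    simp [hc]
  have hdim : Module.finrank K (K ⊗[k] F) = Module.finrank K ((F →ₐ[k] K) → K) := by
    rw [Module.finrank_baseChange, Module.finrank_pi]
    exact hcard.symm
  have hinj : Function.Injective Φ.toLinearMap :=
    (LinearMap.injective_iff_surjective_of_finrank_eq_finrank hdim).mpr hsurj
  let e : (K ⊗[k] F) ≃ₐ[K] ((F →ₐ[k] K) → K) := AlgEquiv.ofBijective Φ ⟨hinj, hsurj⟩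
  -- trace transport along e
  have htr : ∀ x : K ⊗[k] F,
      Algebra.trace K (K ⊗[k] F) x = Algebra.trace K ((F →ₐ[k] K) → K) (e x) := by
    intro x
    rw [Algebra.trace_apply, Algebra.trace_apply, ← LinearMap.trace_conj' _ e.toLinearEquiv]
    congr 1
    refine LinearMap.ext fun v => ?_
    show e (x * e.symm v) = e x * v
    rw [map_mul, AlgEquiv.apply_symm_apply]
  -- trace on Pi
  have htrPi : ∀ a : (F →ₐ[k] K) → K, Algebra.trace K ((F →ₐ[k] K) → K) a = ∑ χ : F →ₐ[k] K, a χ := by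
    intro a
    rw [Algebra.trace_eq_matrix_trace (Pi.basisFun K (F →ₐ[k] K)), Matrix.trace]
    refine Finset.sum_congr rfl fun χ _ => ?_
    simp [Matrix.diag, Algebra.leftMulMatrix_eq_repr_mul, Pi.basisFun_apply]
  -- base change of trace
  have hbc : Algebra.trace K (K ⊗[k] F) ((1 : K) ⊗ₜ[k] y) =
      algebraMap k K (Algebra.trace k F y) := by
    have hmul : Algebra.lmul K (K ⊗[k] F) ((1 : K) ⊗ₜ[k] y) =
        (Algebra.lmul k F y).baseChange K := by
      apply LinearMap.ext
      intro t
      induction t using TensorProduct.induction_on with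
      | zero => simp
      | tmul c f => simp [Algebra.TensorProduct.tmul_mul_tmul]
      | add a b ha hb => simp only [map_add, mul_add, ha, hb]
    rw [Algebra.trace_apply, hmul, LinearMap.trace_baseChange, ← Algebra.trace_apply]
  rw [← hbc, htr, htrPi]
  refine Finset.sum_congr rfl fun χ _ => ?_
  show Φ ((1 : K) ⊗ₜ[k] y) χ = χ y
  rw [hΦ]
  simp

/-- Let `K` be a field extension of `k` such that the number of `k`-algebra
homomorphisms `F →ₐ[k] K` equals `dim_k F`. Then for every `t ∈ F³` and all
`φ, ψ : F →ₐ[k] K`, one has `Π(φ,ψ)(Tr(t)) = Σ_{χ} Π(φ,χ,ψ)(t)`, where `Π` denotes the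
product map determined by the given homomorphisms on each tensor factor. -/
theorem productMap_trF3 [FiniteDimensional k F] [Algebra.Etale k F]
    (K : Type u) [Field K] [Algebra k K] [Fintype (F →ₐ[k] K)]
    (hcard : Fintype.card (F →ₐ[k] K) = Module.finrank k F)
    (t : F ⊗[k] (F ⊗[k] F)) (φ ψ : F →ₐ[k] K) :
    Algebra.TensorProduct.productMap φ ψ (trF3 k F t) =
      ∑ χ : F →ₐ[k] K,
        Algebra.TensorProduct.productMap φ (Algebra.TensorProduct.productMap χ ψ) t := by
  classical
  induction t using TensorProduct.induction_on with
  | zero => simp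
  | add a b ha hb =>
    simp only [map_add, ha, hb, Finset.sum_add_distrib]
  | tmul x s =>
    induction s using TensorProduct.induction_on with
    | zero => simp [TensorProduct.tmul_zero]
    | add a b ha hb =>
      simp only [TensorProduct.tmul_add, map_add, ha, hb, Finset.sum_add_distrib]
    | tmul y z =>
      rw [trF3_tmul, map_smul, Algebra.TensorProduct.productMap_apply_tmul,
        Algebra.smul_def, algebraMap_trace_eq_sum_algHom k F K hcard, Finset.sum_mul]
      refine Finset.sum_congr rfl fun χ _ => ?_
      simp only [Algebra.TensorProduct.productMap_apply_tmul]
      ring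
end

section
/- Let K be a field extension of k such that the number of k-algebra homomorphisms from F to K equals dim_k F. Then for every c ∈ F³, all x, y ∈ F² and all φ, ψ ∈ (F →ₐ[k] K), one has Π(φ,ψ)(x ⋆_c y) = Σ_{χ ∈ (F →ₐ[k] K)} Π(φ,χ)(x) · Π(φ,χ,ψ)(c) · Π(χ,ψ)(y). (That is, the evaluation map Ψ₁ sending t ∈ F² to the function (φ,ψ) ↦ Π(φ,ψ)(t) is multiplicative from A(F,c) to the algebra of functions on pairs of homomorphisms with Brauer-factor-set multiplication determined by c.) -/
open TensorProduct

universe u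

variable (k F : Type u) [Field k] [CommRing F] [Algebra k F]

section Aux

/-- Trace of an element of a finite power of a field is the sum of its coordinates. -/
lemma trace_pi (K : Type u) [Field K] (ι : Type u) [Fintype ι] [DecidableEq ι]
    (v : ι → K) : Algebra.trace K (ι → K) v = ∑ i, v i := by
  classical
  rw [Algebra.trace_eq_matrix_trace (Pi.basisFun K ι), Matrix.trace]
  congr 1
  ext i
  simp [Algebra.leftMulMatrix_apply, LinearMap.toMatrix_apply, Matrix.diag]

/-- Base change compatibility of the algebra trace. -/
lemma trace_one_tmul (R S A : Type u) [CommRing R] [CommRing S] [CommRing A]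
    [Algebra R S] [Algebra R A] [Module.Free R A] [Module.Finite R A] (b : A) :
    Algebra.trace S (S ⊗[R] A) (1 ⊗ₜ[R] b) = algebraMap R S (Algebra.trace R A b) := by
  have h : (LinearMap.mul S (S ⊗[R] A)) (1 ⊗ₜ[R] b)
      = ((LinearMap.mul R A) b).baseChange S := by
    apply LinearMap.ext
    intro z
    induction z with
    | zero => simp
    | tmul s a => simp [Algebra.TensorProduct.tmul_mul_tmul]
    | add u v hu hv => simp only [map_add, mul_add, ← hu, ← hv]
  have h2 : (Algebra.lmul S (S ⊗[R] A)) (1 ⊗ₜ[R] b)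
      = ((Algebra.lmul R A) b).baseChange S := h
  rw [Algebra.trace_apply, h2, LinearMap.trace_baseChange, Algebra.trace_apply]

/-- For `χ : F →ₐ[k] K`, the induced `K`-algebra hom `K ⊗[k] F → K`. -/
noncomputable def Lam (K : Type u) [Field K] [Algebra k K] (χ : F →ₐ[k] K) :
    K ⊗[k] F →ₐ[K] K :=
  Algebra.TensorProduct.productLeftAlgHom (AlgHom.id K K) χ

@[simp] lemma Lam_tmul (K : Type u) [Field K] [Algebra k K] (χ : F →ₐ[k] K)
    (a : K) (x : F) : Lam k F K χ (a ⊗ₜ[k] x) = a * χ x := by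
  simp [Lam]

/-- If `K` splits `F` then the trace of `F` over `k`, pushed into `K`, is the sum of
all the `k`-algebra homomorphisms `F → K`. -/
lemma traceSum [FiniteDimensional k F] (K : Type u) [Field K] [Algebra k K]
    [Fintype (F →ₐ[k] K)]
    (hcard : Fintype.card (F →ₐ[k] K) = Module.finrank k F) (b : F) :
    algebraMap k K (Algebra.trace k F b) = ∑ χ : F →ₐ[k] K, χ b := by
  classical
  by_cases hne : Nonempty (F →ₐ[k] K)
  · set A := K ⊗[k] F
    have hfr : Module.finrank K A = Module.finrank k F := Module.finrank_baseChange
    let coeFnLM : Module.Dual K A →ₗ[K] (A → K) :=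
      { toFun := fun ℓ => ⇑ℓ, map_add' := fun _ _ => rfl, map_smul' := fun _ _ => rfl }
    have hinjmh : Function.Injective
        (fun χ : (F →ₐ[k] K) => ((Lam k F K χ : K ⊗[k] F →ₐ[K] K) : A →* K)) := by
      intro χ χ' h
      ext x
      have := DFunLike.congr_fun h ((1 : K) ⊗ₜ[k] x)
      simpa using this
    have lifun : LinearIndependent K
        (fun χ : (F →ₐ[k] K) => (⇑(Lam k F K χ) : A → K)) :=
      (linearIndependent_monoidHom A K).comp _ hinjmh
    have li : LinearIndependent K
        (fun χ : (F →ₐ[k] K) => (Lam k F K χ).toLinearMap) :=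
      LinearIndependent.of_comp coeFnLM lifun
    have hspan : Submodule.span K
        (Set.range (fun χ : (F →ₐ[k] K) => (Lam k F K χ).toLinearMap)) = ⊤ :=
      li.span_eq_top_of_card_eq_finrank (by
        rw [hcard, ← hfr, Subspace.dual_finrank_eq])
    let Θ : A →ₐ[K] ((F →ₐ[k] K) → K) := Pi.algHom _ _ (fun χ => Lam k F K χ)
    have hinj : Function.Injective Θ := by
      rw [injective_iff_map_eq_zero]
      intro a ha
      rw [← Module.forall_dual_apply_eq_zero_iff K a]
      intro φ
      have hφ : φ ∈ Submodule.span K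
          (Set.range (fun χ : (F →ₐ[k] K) => (Lam k F K χ).toLinearMap)) := by
        rw [hspan]; trivial
      induction hφ using Submodule.span_induction with
      | mem g hg =>
        obtain ⟨χ, rfl⟩ := hg
        exact congrFun ha χ
      | zero => simp
      | add g h _ _ hg hh => simp [hg, hh]
      | smul c g _ hg => simp [hg]
    have hsurj : Function.Surjective Θ := by
      have hfr2 : Module.finrank K A = Module.finrank K ((F →ₐ[k] K) → K) := by
        rw [hfr, ← hcard, Module.finrank_pi]
      exact (LinearMap.injective_iff_surjective_of_finrank_eq_finrank
        (f := Θ.toLinearMap) hfr2).mp hinj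
    let e : A ≃ₐ[K] ((F →ₐ[k] K) → K) := AlgEquiv.ofBijective Θ ⟨hinj, hsurj⟩
    have h1 : Algebra.trace K ((F →ₐ[k] K) → K) (e ((1 : K) ⊗ₜ[k] b))
        = Algebra.trace K A ((1 : K) ⊗ₜ[k] b) := Algebra.trace_eq_of_algEquiv e _
    have h2 : e ((1 : K) ⊗ₜ[k] b) = fun χ => χ b := by
      ext χ
      show Lam k F K χ ((1 : K) ⊗ₜ[k] b) = χ b
      simp
    rw [← trace_one_tmul k K F b, ← h1, h2, trace_pi]
  · have h0 : Fintype.card (F →ₐ[k] K) = 0 := by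
      simpa [Fintype.card_eq_zero_iff] using not_nonempty_iff.mp hne
    have : Module.finrank k F = 0 := by rw [← hcard, h0]
    have : Subsingleton F := by
      rw [← Module.finrank_zero_iff (R := k)]
      omega
    have hb : b = 0 := Subsingleton.elim _ _
    simp [hb]

/-- The `k`-algebra equivalence `F³ ≃ (F²) ⊗ F`, `a ⊗ b ⊗ d ↦ (a ⊗ d) ⊗ b`. -/
noncomputable def kequiv : F ⊗[k] (F ⊗[k] F) ≃ₐ[k] (F ⊗[k] F) ⊗[k] F :=
  (Algebra.TensorProduct.congr AlgEquiv.refl (Algebra.TensorProduct.comm k F F)).trans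
    (Algebra.TensorProduct.assoc k k k F F F).symm

@[simp] lemma kequiv_tmul (a b d : F) :
    kequiv k F (a ⊗ₜ[k] (b ⊗ₜ[k] d)) = (a ⊗ₜ[k] d) ⊗ₜ[k] b := by
  simp [kequiv, Algebra.TensorProduct.assoc_symm_tmul]

lemma kequiv_eps1 (s : F ⊗[k] F) : kequiv k F (eps1 k F s) = s ⊗ₜ[k] (1 : F) := by
  have h : (kequiv k F).toAlgHom.comp (eps1 k F)
      = (Algebra.TensorProduct.includeLeft :
          F ⊗[k] F →ₐ[k] (F ⊗[k] F) ⊗[k] F) := by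
    ext x
    · simp [eps1]
    · simp [eps1]
  exact DFunLike.congr_fun h s

/-- `F²`-algebra equivalence `F³ ≃ₐ[F²] (F²) ⊗[k] F` (with the `ε₁`-structure on `F³`). -/
noncomputable def e2 : (F ⊗[k] (F ⊗[k] F)) ≃ₐ[F ⊗[k] F] ((F ⊗[k] F) ⊗[k] F) :=
  AlgEquiv.ofRingEquiv (f := (kequiv k F).toRingEquiv) (fun s => kequiv_eps1 k F s)

/-- Computation of the trace of a pure tensor in `F³` over `F²`. -/
lemma trF3_tmul_s6 [FiniteDimensional k F] (a b d : F) :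
    trF3 k F (a ⊗ₜ[k] (b ⊗ₜ[k] d))
      = (a ⊗ₜ[k] d) * algebraMap k (F ⊗[k] F) (Algebra.trace k F b) := by
  have key : a ⊗ₜ[k] (b ⊗ₜ[k] d) = (a ⊗ₜ[k] d) • ((1:F) ⊗ₜ[k] (b ⊗ₜ[k] (1:F))) := by
    rw [Algebra.smul_def]
    show _ = eps1 k F (a ⊗ₜ[k] d) * _
    simp [eps1, Algebra.TensorProduct.tmul_mul_tmul]
  rw [key, map_smul, smul_eq_mul]
  congr 1
  have h1 := Algebra.trace_eq_of_algEquiv (e2 k F) ((1:F) ⊗ₜ[k] (b ⊗ₜ[k] (1:F)))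
  have h2 : e2 k F ((1:F) ⊗ₜ[k] (b ⊗ₜ[k] (1:F))) = (1 : F ⊗[k] F) ⊗ₜ[k] b := by
    show kequiv k F _ = _
    rw [kequiv_tmul]
    rfl
  rw [h2] at h1
  show Algebra.trace (F ⊗[k] F) (F ⊗[k] (F ⊗[k] F)) _ = _
  rw [← h1]
  exact trace_one_tmul k (F ⊗[k] F) F b

end Aux

/-- Let `K` be a field extension of `k` with `#(F →ₐ[k] K) = dim_k F`. For
every `c ∈ F³`, all `x, y ∈ F²` and all `φ, ψ : F →ₐ[k] K`,
`Π(φ,ψ)(x ⋆_c y) = Σ_χ Π(φ,χ)(x)·Π(φ,χ,ψ)(c)·Π(χ,ψ)(y)`; that is, the evaluation map `Ψ₁`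
is multiplicative from `A(F,c)` to the algebra of functions on pairs of homomorphisms with
the Brauer-factor-set multiplication determined by `c`. -/
theorem productMap_starMul [FiniteDimensional k F] [Algebra.Etale k F]
    (K : Type u) [Field K] [Algebra k K] [Fintype (F →ₐ[k] K)]
    (hcard : Fintype.card (F →ₐ[k] K) = Module.finrank k F)
    (c : F ⊗[k] (F ⊗[k] F)) (x y : F ⊗[k] F) (φ ψ : F →ₐ[k] K) :
    Algebra.TensorProduct.productMap φ ψ (starMul k F c x y) =
      ∑ χ : F →ₐ[k] K,
        Algebra.TensorProduct.productMap φ χ x *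
          Algebra.TensorProduct.productMap φ (Algebra.TensorProduct.productMap χ ψ) c *
          Algebra.TensorProduct.productMap χ ψ y := by
  classical
  induction x with
  | zero => simp [starMul]
  | add x₁ x₂ hx₁ hx₂ =>
    have hL : starMul k F c (x₁ + x₂) y = starMul k F c x₁ y + starMul k F c x₂ y := by
      simp [starMul, map_add, add_mul]
    rw [hL, map_add, hx₁, hx₂, ← Finset.sum_add_distrib]
    refine Finset.sum_congr rfl fun χ _ => ?_
    rw [map_add]; ring
  | tmul x1 x2 =>
    induction y with
    | zero => simp [starMul]
    | add y₁ y₂ hy₁ hy₂ =>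
      have hL : starMul k F c (x1 ⊗ₜ[k] x2) (y₁ + y₂)
          = starMul k F c (x1 ⊗ₜ[k] x2) y₁ + starMul k F c (x1 ⊗ₜ[k] x2) y₂ := by
        simp [starMul, map_add, mul_add]
      rw [hL, map_add, hy₁, hy₂, ← Finset.sum_add_distrib]
      refine Finset.sum_congr rfl fun χ _ => ?_
      rw [map_add]; ring
    | tmul y1 y2 =>
      induction c with
      | zero => simp [starMul]
      | add c₁ c₂ hc₁ hc₂ =>
        have hL : starMul k F (c₁ + c₂) (x1 ⊗ₜ[k] x2) (y1 ⊗ₜ[k] y2)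
            = starMul k F c₁ (x1 ⊗ₜ[k] x2) (y1 ⊗ₜ[k] y2)
              + starMul k F c₂ (x1 ⊗ₜ[k] x2) (y1 ⊗ₜ[k] y2) := by
          simp [starMul, mul_add, add_mul]
        rw [hL, map_add, hc₁, hc₂, ← Finset.sum_add_distrib]
        refine Finset.sum_congr rfl fun χ _ => ?_
        rw [map_add]; ring
      | tmul c1 w =>
        induction w with
        | zero =>
          rw [tmul_zero]
          simp [starMul]
        | add w₁ w₂ hw₁ hw₂ =>
          rw [tmul_add]
          have hL : starMul k F (c1 ⊗ₜ[k] w₁ + c1 ⊗ₜ[k] w₂) (x1 ⊗ₜ[k] x2) (y1 ⊗ₜ[k] y2)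
              = starMul k F (c1 ⊗ₜ[k] w₁) (x1 ⊗ₜ[k] x2) (y1 ⊗ₜ[k] y2)
                + starMul k F (c1 ⊗ₜ[k] w₂) (x1 ⊗ₜ[k] x2) (y1 ⊗ₜ[k] y2) := by
            simp [starMul, mul_add, add_mul]
          rw [hL, map_add, hw₁, hw₂, ← Finset.sum_add_distrib]
          refine Finset.sum_congr rfl fun χ _ => ?_
          rw [map_add]; ring
        | tmul c2 c3 =>
          have he : eps2 k F (x1 ⊗ₜ[k] x2) * (c1 ⊗ₜ[k] (c2 ⊗ₜ[k] c3))
                * eps0 k F (y1 ⊗ₜ[k] y2)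
              = (x1 * c1) ⊗ₜ[k] ((x2 * c2 * y1) ⊗ₜ[k] (c3 * y2)) := by
            simp only [eps2, eps0, Algebra.TensorProduct.map_tmul, AlgHom.coe_id, id_eq,
              Algebra.TensorProduct.includeLeft_apply, Algebra.TensorProduct.includeRight_apply,
              Algebra.TensorProduct.tmul_mul_tmul, mul_one, one_mul]
          rw [starMul, he, trF3_tmul_s6, map_mul, Algebra.TensorProduct.productMap_apply_tmul,
            AlgHom.commutes, traceSum k F K hcard, Finset.mul_sum]
          refine Finset.sum_congr rfl fun χ _ => ?_
          simp only [Algebra.TensorProduct.productMap_apply_tmul, map_mul]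
          ring
end

section
/- Let k be a field, A a finite-dimensional central simple k-algebra, and F ⊆ A a commutative étale k-subalgebra with (dim_k F)² = dim_k A (a maximal commutative separable subalgebra). If the cardinality of k is strictly greater than dim_k A (in particular, if k is infinite), then there exists v ∈ A such that the k-linear map F ⊗[k] F → A sending f₁ ⊗ f₂ to f₁·v·f₂ is bijective. -/
open TensorProduct

set_option maxHeartbeats 1000000
set_option synthInstance.maxHeartbeats 200000

universe u

variable (k F A : Type u) [Field k] [CommRing F] [Algebra k F] [Ring A] [Algebra k A]

/-- The `k`-linear map `F ⊗ F → A`, `f₁ ⊗ f₂ ↦ ι(f₁)·v·ι(f₂)`, where `ι : F → A` realises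
`F` as a subalgebra of `A`. -/
noncomputable def Phi (ι : F →ₐ[k] A) (v : A) : F ⊗[k] F →ₗ[k] A :=
  TensorProduct.lift <| LinearMap.mk₂ k (fun r₁ r₂ => ι r₁ * v * ι r₂)
    (by intro m₁ m₂ n; simp [add_mul])
    (by intro c m n; simp [smul_mul_assoc])
    (by intro m n₁ n₂; simp [mul_add])
    (by intro c m n; simp [mul_smul_comm])

/-- The Artin–Whaples style key lemma: in a central simple algebra, if
`∑ xᵢ a yᵢ = 0` for all `a` with the `yᵢ` linearly independent, then all `xᵢ = 0`. -/
theorem artin_key [Algebra.IsCentral k A] [IsSimpleRing A] :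
    ∀ (n : ℕ) (x y : Fin n → A), LinearIndependent k y →
      (∀ a : A, ∑ i, x i * a * y i = 0) → ∀ i, x i = 0 := by
  intro n
  induction n with
  | zero => intro x y _ _ i; exact i.elim0
  | succ n ih =>
    intro x y hy h j
    by_contra hxj
    -- the two-sided ideal generated by `x j` is everything
    have hspan : TwoSidedIdeal.span {x j} = ⊤ := by
      rcases (IsSimpleRing.simple (R := A)).2 (TwoSidedIdeal.span {x j}) with h' | h'
      · exfalso
        apply hxj
        have hm : x j ∈ TwoSidedIdeal.span {x j} := TwoSidedIdeal.subset_span rfl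
        rw [h'] at hm
        exact (TwoSidedIdeal.mem_bot _).mp hm
      · exact h'
    have h1 : (1 : A) ∈ TwoSidedIdeal.span {x j} := by rw [hspan]; trivial
    rw [TwoSidedIdeal.mem_span_iff_mem_addSubgroup_closure] at h1
    -- property: z is the j-th coefficient of a family satisfying the same relation
    set S : A → Prop := fun z =>
      ∃ x' : Fin (n + 1) → A, x' j = z ∧ ∀ a : A, ∑ i, x' i * a * y i = 0 with hS
    have hS1 : S 1 := by
      refine AddSubgroup.closure_induction ?_ ?_ ?_ ?_ h1 (p := fun z _ => S z)
      · rintro z ⟨_, ⟨u, -, t, ht, rfl⟩, w, -, rfl⟩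
        rw [Set.mem_singleton_iff] at ht
        subst ht
        refine ⟨fun i => u * x i * w, rfl, fun a => ?_⟩
        have : ∀ i : Fin (n + 1), u * x i * w * a * y i = u * (x i * (w * a) * y i) := by
          intro i; noncomm_ring
        rw [Finset.sum_congr rfl fun i _ => this i, ← Finset.mul_sum, h (w * a), mul_zero]
      · exact ⟨0, rfl, fun a => by simp⟩
      · rintro z₁ z₂ - - ⟨x₁, hx₁, hr₁⟩ ⟨x₂, hx₂, hr₂⟩
        refine ⟨x₁ + x₂, by simp [hx₁, hx₂], fun a => ?_⟩
        have : ∀ i : Fin (n + 1), (x₁ + x₂) i * a * y i = x₁ i * a * y i + x₂ i * a * y i := by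
          intro i; simp [add_mul]
        rw [Finset.sum_congr rfl fun i _ => this i, Finset.sum_add_distrib, hr₁ a, hr₂ a,
          add_zero]
      · rintro z - ⟨x₁, hx₁, hr₁⟩
        refine ⟨-x₁, by simp [hx₁], fun a => ?_⟩
        have : ∀ i : Fin (n + 1), (-x₁) i * a * y i = -(x₁ i * a * y i) := by
          intro i; simp
        rw [Finset.sum_congr rfl fun i _ => this i, Finset.sum_neg_distrib, hr₁ a, neg_zero]
    obtain ⟨x', hx'j, hx'⟩ := hS1
    -- commutator relation
    have hd : ∀ c a : A, ∑ i, (x' i * c - c * x' i) * a * y i = 0 := by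
      intro c a
      have e1 := hx' (c * a)
      have e2 : c * ∑ i, x' i * a * y i = 0 := by rw [hx' a, mul_zero]
      rw [Finset.mul_sum] at e2
      have : ∀ i : Fin (n + 1),
          (x' i * c - c * x' i) * a * y i = x' i * (c * a) * y i - c * (x' i * a * y i) := by
        intro i; noncomm_ring
      rw [Finset.sum_congr rfl fun i _ => this i, Finset.sum_sub_distrib, e1, e2, sub_zero]
    -- apply the induction hypothesis away from index j
    have hind : ∀ c : A, ∀ i : Fin n, x' (j.succAbove i) * c - c * x' (j.succAbove i) = 0 := by
      intro c
      refine ih (fun i => x' (j.succAbove i) * c - c * x' (j.succAbove i))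
        (fun i => y (j.succAbove i))
        (hy.comp j.succAbove Fin.succAbove_right_injective) (fun a => ?_)
      have := hd c a
      rw [Fin.sum_univ_succAbove _ j, hx'j] at this
      simpa using this
    -- so the off-j coefficients are central, hence scalars
    have hcen : ∀ i : Fin n, ∃ l : k, algebraMap k A l = x' (j.succAbove i) := by
      intro i
      have hc : x' (j.succAbove i) ∈ Subalgebra.center k A := by
        rw [Subalgebra.mem_center_iff]
        intro c
        have := hind c i
        rw [sub_eq_zero] at this
        exact this.symm
      have := Algebra.IsCentral.out (K := k) (D := A) hc
      exact Algebra.mem_bot.mp this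
    choose l hl using hcen
    -- contradiction with linear independence
    set g : Fin (n + 1) → k := j.insertNth (1 : k) l with hg
    have hrel : ∑ i, g i • y i = 0 := by
      rw [Fin.sum_univ_succAbove _ j]
      have := hx' 1
      rw [Fin.sum_univ_succAbove _ j, hx'j] at this
      have hterm : ∀ i : Fin n,
          g (j.succAbove i) • y (j.succAbove i)
            = x' (j.succAbove i) * 1 * y (j.succAbove i) := by
        intro i
        rw [hg, Fin.insertNth_apply_succAbove, ← hl i, mul_one, Algebra.smul_def]
      rw [Finset.sum_congr rfl fun i _ => hterm i, hg, Fin.insertNth_apply_same, one_smul]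
      simpa using this
    have := Fintype.linearIndependent_iff.mp hy _ hrel j
    rw [hg, Fin.insertNth_apply_same] at this
    exact one_ne_zero this

/-- Every element of `M ⊗ F` is a sum `∑ cⱼ ⊗ bⱼ` over a basis of `F`. -/
theorem tensor_repr {ι : Type*} [Fintype ι] (b : Module.Basis ι k F) (t : F ⊗[k] F) :
    ∃ c : ι → F, t = ∑ j, c j ⊗ₜ[k] b j := by
  induction t with
  | zero => exact ⟨0, by simp⟩
  | tmul f g =>
    refine ⟨fun j => b.repr g j • f, ?_⟩
    have : ∀ j, (b.repr g j • f) ⊗ₜ[k] b j = f ⊗ₜ[k] (b.repr g j • b j) := by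
      intro j; rw [TensorProduct.smul_tmul]
    rw [Finset.sum_congr rfl fun j _ => this j, ← TensorProduct.tmul_sum, b.sum_repr]
  | add u v hu hv =>
    obtain ⟨c₁, rfl⟩ := hu
    obtain ⟨c₂, rfl⟩ := hv
    exact ⟨c₁ + c₂, by simp [TensorProduct.add_tmul, Finset.sum_add_distrib]⟩

/-- Right multiplication by `ι f`, as a `k`-algebra homomorphism `F →ₐ End_k(A)`. -/
noncomputable def rmulHom (ι : F →ₐ[k] A) : F →ₐ[k] Module.End k A where
  toFun f := LinearMap.mulRight k (ι f)
  map_one' := by ext a; simp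
  map_mul' f g := by
    ext a
    simp only [map_mul, LinearMap.mulRight_apply, Module.End.mul_apply]
    rw [show ι f * ι g = ι g * ι f by rw [← map_mul, ← map_mul, mul_comm], ← mul_assoc]
  map_zero' := by ext a; simp
  map_add' f g := by ext a; simp [mul_add]
  commutes' c := by
    ext a
    simp [AlgHom.commutes, Module.algebraMap_end_apply, Algebra.algebraMap_eq_smul_one,
      mul_smul_comm]

/-- The algebra map `F ⊗ F →ₐ End_k(A)`, `f ⊗ g ↦ (a ↦ ι f * a * ι g)`. -/
noncomputable def psi (ι : F →ₐ[k] A) : F ⊗[k] F →ₐ[k] Module.End k A :=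
  Algebra.TensorProduct.lift ((Algebra.lmul k A).comp ι) (rmulHom k F A ι)
    (fun f g => by
      ext a
      simp [Module.End.mul_apply, rmulHom, mul_assoc])

theorem psi_tmul (ι : F →ₐ[k] A) (f g : F) (a : A) :
    psi k F A ι (f ⊗ₜ[k] g) a = ι f * a * ι g := by
  simp [psi, Algebra.TensorProduct.lift_tmul, rmulHom, Module.End.mul_apply, mul_assoc]

/-- Faithfulness: `psi` is injective (has trivial kernel). -/
theorem psi_ker [Algebra.IsCentral k A] [IsSimpleRing A] [FiniteDimensional k F]
    (ι : F →ₐ[k] A) (hι : Function.Injective ι) :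
    ∀ t : F ⊗[k] F, psi k F A ι t = 0 → t = 0 := by
  intro t ht
  obtain ⟨c, rfl⟩ := tensor_repr k F (Module.finBasis k F) t
  set b := Module.finBasis k F with hb
  have h : ∀ a : A, ∑ j, ι (c j) * a * ι (b j) = 0 := by
    intro a
    have h0 : (∑ j : Fin (Module.finrank k F), psi k F A ι (c j ⊗ₜ[k] b j)) a = 0 := by rw [← map_sum, ht]; rfl
    rw [LinearMap.sum_apply] at h0
    rw [← h0]
    exact Finset.sum_congr rfl fun j _ => (psi_tmul k F A ι (c j) (b j) a).symm
  have hli : LinearIndependent k fun j => ι (b j) := by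
    have := b.linearIndependent.map' ι.toLinearMap (LinearMap.ker_eq_bot.mpr hι)
    exact this
  have hz := artin_key k A _ (fun j => ι (c j)) (fun j => ι (b j)) hli h
  have hc : ∀ j, c j = 0 := fun j => hι (by rw [map_zero]; exact hz j)
  simp [hc]

/-- Let `k` be a field, `A` a finite-dimensional central simple `k`-algebra
and `F ⊆ A` a commutative étale `k`-subalgebra with `(dim_k F)² = dim_k A` (a maximal
commutative separable subalgebra). If `|k| > dim_k A`, then there exists `v ∈ A` such that
the map `F ⊗[k] F → A`, `f₁ ⊗ f₂ ↦ f₁·v·f₂`, is bijective. -/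
theorem exists_v_phi_bijective
    [FiniteDimensional k A] [Algebra.IsCentral k A] [IsSimpleRing A]
    [FiniteDimensional k F] [Algebra.Etale k F]
    (ι : F →ₐ[k] A) (hι : Function.Injective ι)
    (hmax : Module.finrank k F * Module.finrank k F = Module.finrank k A)
    (hcard : (Module.finrank k A : Cardinal) < Cardinal.mk k) :
    ∃ v : A, Function.Bijective (Phi k F A ι v) := by
  classical
  -- instances on B := F ⊗ F
  haveI : IsArtinianRing (F ⊗[k] F) := IsArtinianRing.of_finite k _
  haveI : Algebra.FormallyEtale k (F ⊗[k] F) := Algebra.FormallyEtale.comp k F _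
  haveI : IsReduced (F ⊗[k] F) := Algebra.FormallyUnramified.isReduced_of_field k _
  haveI : Finite (MaximalSpectrum (F ⊗[k] F)) :=
    inferInstance
  haveI : Fintype (MaximalSpectrum (F ⊗[k] F)) := Fintype.ofFinite _
  set e := IsArtinianRing.equivPi (F ⊗[k] F) with he
  set ε : MaximalSpectrum (F ⊗[k] F) → F ⊗[k] F :=
    fun I => e.symm (Pi.single I 1) with hε
  -- basic properties of the idempotents ε
  have hmul : ∀ I J, ε I * ε J = if I = J then ε I else 0 := by
    intro I J
    apply e.injective
    rw [map_mul, AlgEquiv.apply_symm_apply, AlgEquiv.apply_symm_apply]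
    by_cases hIJ : I = J
    · subst hIJ
      rw [if_pos rfl, AlgEquiv.apply_symm_apply]
      funext x
      rw [Pi.mul_apply]
      rcases eq_or_ne x I with rfl | hx
      · rw [Pi.single_eq_same, one_mul]
      · rw [Pi.single_eq_of_ne hx, zero_mul]
    · rw [if_neg hIJ, map_zero]
      funext x
      rw [Pi.mul_apply, Pi.zero_apply]
      rcases eq_or_ne x I with rfl | hx
      · rw [Pi.single_eq_of_ne (fun h : x = J => hIJ h), mul_zero]
      · rw [Pi.single_eq_of_ne hx, zero_mul]
  have hεne : ∀ I, ε I ≠ 0 := by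
    intro I hI0
    haveI : I.1.IsMaximal := I.2
    have := congrFun (congrArg e hI0)
    rw [AlgEquiv.apply_symm_apply, map_zero] at this
    have h1 := this I
    rw [Pi.single_eq_same] at h1
    exact one_ne_zero h1
  -- pick witnesses of faithfulness
  have hfaith : ∀ I, ∃ a : A, psi k F A ι (ε I) a ≠ 0 := by
    intro I
    by_contra hcon
    push_neg at hcon
    exact hεne I (psi_ker k F A ι hι (ε I) (LinearMap.ext fun a => hcon a))
  choose w hw using hfaith
  set v : A := ∑ I, psi k F A ι (ε I) (w I) with hv
  -- ε I • v = ε I • w I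
  have hcomp : ∀ I, psi k F A ι (ε I) v = psi k F A ι (ε I) (w I) := by
    intro I
    rw [hv, map_sum]
    have : ∀ J, psi k F A ι (ε I) (psi k F A ι (ε J) (w J))
        = if I = J then psi k F A ι (ε I) (w I) else 0 := by
      intro J
      have : psi k F A ι (ε I) (psi k F A ι (ε J) (w J))
          = psi k F A ι (ε I * ε J) (w J) := by
        rw [map_mul]; rfl
      rw [this, hmul I J]
      split
      · subst ‹I = J›; rfl
      · simp
    rw [Finset.sum_congr rfl fun J _ => this J]
    simp
  -- injectivity on the level of `t ↦ psi t v`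
  have hinj : ∀ t : F ⊗[k] F, psi k F A ι t v = 0 → t = 0 := by
    intro t ht
    apply e.injective
    rw [map_zero]
    funext I
    by_contra hne
    haveI : I.1.IsMaximal := I.2
    obtain ⟨q, hq⟩ := Ideal.Quotient.exists_inv (a := e t I) hne
    set w' : F ⊗[k] F := e.symm (Pi.single I q) with hw'
    have hkey : (w' * t) * ε I = ε I := by
      apply e.injective
      rw [map_mul, map_mul, AlgEquiv.apply_symm_apply, AlgEquiv.apply_symm_apply]
      funext x
      rw [Pi.mul_apply, Pi.mul_apply]
      rcases eq_or_ne x I with rfl | hx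
      · rw [Pi.single_eq_same, Pi.single_eq_same, mul_comm q (e t x), hq, one_mul]
      · simp [Pi.single_eq_of_ne hx]
    have h0 : psi k F A ι (ε I) v = 0 := by
      rw [← hkey]
      have : (w' * t) * ε I = w' * (ε I * t) := by ring
      rw [this, map_mul, map_mul]
      have : psi k F A ι w' * (psi k F A ι (ε I) * psi k F A ι t)
          = psi k F A ι w' * psi k F A ι (ε I) * psi k F A ι t := by rw [mul_assoc]
      rw [this]
      show (psi k F A ι w' * psi k F A ι (ε I)) (psi k F A ι t v) = 0
      rw [ht, map_zero]
    rw [hcomp I] at h0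
    exact hw I h0
  -- relate Phi and psi
  have hpt : ∀ t : F ⊗[k] F, Phi k F A ι v t = psi k F A ι t v := by
    intro t
    induction t with
    | zero => simp
    | tmul f g => rw [psi_tmul]; simp [Phi]
    | add u u' hu hu' => rw [map_add, hu, hu', map_add]; rfl
  refine ⟨v, ?_, ?_⟩
  · -- injective
    intro s t hst
    have h0 : Phi k F A ι v (s - t) = 0 := by rw [map_sub, hst, sub_self]
    rw [hpt] at h0
    have := hinj (s - t) h0
    exact sub_eq_zero.mp this
  · -- surjective, by dimension count
    have hdim : Module.finrank k (F ⊗[k] F) = Module.finrank k A := by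
      rw [Module.finrank_tensorProduct]; exact hmax
    have hinj' : Function.Injective (Phi k F A ι v) := by
      intro s t hst
      have h0 : Phi k F A ι v (s - t) = 0 := by rw [map_sub, hst, sub_self]
      rw [hpt] at h0
      exact sub_eq_zero.mp (hinj (s - t) h0)
    exact (LinearMap.injective_iff_surjective_of_finrank_eq_finrank hdim).mp hinj'
end
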